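/- Let (u, v, pu, pv) solve the FLRW null geodesic system on [s₁,S) with angular momentum L > 0, with the mass shell relation 4t²r²·pu·pv = L² holding on [s₁,S). (i) If pv(s₁) ≥ pu(s₁), then pv(s) ≥ pu(s) for all s ∈ [s₁,S), and r is nondecreasing on [s₁,S). (ii) If pv(s) < pu(s) for all s ∈ [s₁,S), then, setting A := t(s₁)·(pu(s₁) − pv(s₁)) > 0, one has r(s) ≥ (r(s₁)^{−2} + 2A²/L²)^{−1/2} for all s ∈ [s₁,S); in particular inf_{[s₁,S)} r > 0, i.e. a non-radial null geodesic remains away from the centre of symmetry. -/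

import Mathlib

/-- The time coordinate `t = (v+u)²/4` along a curve in double null coordinates. -/
noncomputable def tOf (u v : ℝ → ℝ) (s : ℝ) : ℝ := (v s + u s) ^ 2 / 4

/-- The radial coordinate `r = v − u` along a curve in double null coordinates. -/
noncomputable def rOf (u v : ℝ → ℝ) (s : ℝ) : ℝ := v s - u s

/-- **The FLRW null geodesic system** with angular momentum `L` on a set `I ⊆ ℝ`:
`u' = pu`, `v' = pv`,
`pu' = −t^{−1/2}·pu² − (1/2)(1/(2t^{1/2}) + 1/r)·L²/(t²r²)`,
`pv' = −t^{−1/2}·pv² − (1/2)(1/(2t^{1/2}) − 1/r)·L²/(t²r²)`,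
where `t = (v+u)²/4` and `r = v−u` are required to satisfy `v+u > 0`, `r > 0` on `I`,
and `pu ≥ 0`, `pv ≥ 0` on `I`. -/
def FLRWGeodesicSystem (I : Set ℝ) (L : ℝ) (u v pu pv : ℝ → ℝ) : Prop :=
  (∀ s ∈ I, 0 < v s + u s) ∧
  (∀ s ∈ I, 0 < rOf u v s) ∧
  (∀ s ∈ I, 0 ≤ pu s) ∧
  (∀ s ∈ I, 0 ≤ pv s) ∧
  (∀ s ∈ I, HasDerivAt u (pu s) s) ∧
  (∀ s ∈ I, HasDerivAt v (pv s) s) ∧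
  (∀ s ∈ I, HasDerivAt pu
    (-(pu s) ^ 2 / Real.sqrt (tOf u v s)
      - 1 / 2 * (1 / (2 * Real.sqrt (tOf u v s)) + 1 / rOf u v s) * L ^ 2
          / ((tOf u v s) ^ 2 * (rOf u v s) ^ 2)) s) ∧
  (∀ s ∈ I, HasDerivAt pv
    (-(pv s) ^ 2 / Real.sqrt (tOf u v s)
      - 1 / 2 * (1 / (2 * Real.sqrt (tOf u v s)) - 1 / rOf u v s) * L ^ 2
          / ((tOf u v s) ^ 2 * (rOf u v s) ^ 2)) s)

open Set

/-- Antitonicity on `Ico` from a nonpositive derivative. -/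
lemma flrw_aux_antitoneOn {s₁ S : ℝ} {f f' : ℝ → ℝ}
    (hf : ∀ s ∈ Ico s₁ S, HasDerivAt f (f' s) s)
    (h0 : ∀ s ∈ Ico s₁ S, f' s ≤ 0) : AntitoneOn f (Ico s₁ S) := by
  apply antitoneOn_of_deriv_nonpos (convex_Ico s₁ S)
  · exact fun s hs => (hf s hs).continuousAt.continuousWithinAt
  · intro s hs
    rw [interior_Ico] at hs
    exact (hf s (Ioo_subset_Ico_self hs)).differentiableAt.differentiableWithinAt
  · intro s hs
    rw [interior_Ico] at hs
    rw [(hf s (Ioo_subset_Ico_self hs)).deriv]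
    exact h0 s (Ioo_subset_Ico_self hs)

/-- Monotonicity on `Ico` from a nonnegative derivative. -/
lemma flrw_aux_monotoneOn {s₁ S : ℝ} {f f' : ℝ → ℝ}
    (hf : ∀ s ∈ Ico s₁ S, HasDerivAt f (f' s) s)
    (h0 : ∀ s ∈ Ico s₁ S, 0 ≤ f' s) : MonotoneOn f (Ico s₁ S) := by
  apply monotoneOn_of_deriv_nonneg (convex_Ico s₁ S)
  · exact fun s hs => (hf s hs).continuousAt.continuousWithinAt
  · intro s hs
    rw [interior_Ico] at hs
    exact (hf s (Ioo_subset_Ico_self hs)).differentiableAt.differentiableWithinAt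
  · intro s hs
    rw [interior_Ico] at hs
    rw [(hf s (Ioo_subset_Ico_self hs)).deriv]
    exact h0 s (Ioo_subset_Ico_self hs)

/-- **Non-radial null geodesics in FLRW remain away from the centre.**
Let `(u,v,pu,pv)` solve the FLRW null geodesic system on `[s₁,S)` with angular momentum
`L > 0`, with the mass shell relation `4t²r²·pu·pv = L²` holding on `[s₁,S)`.
(i) If `pv(s₁) ≥ pu(s₁)` then `pv ≥ pu` on `[s₁,S)` and `r` is nondecreasing.
(ii) If `pv < pu` on all of `[s₁,S)` then, with `A := t(s₁)(pu(s₁) − pv(s₁)) > 0`,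
`r(s) ≥ (r(s₁)^{−2} + 2A²/L²)^{−1/2}` on `[s₁,S)`; in particular `inf r > 0`. -/
theorem flrw_nonradial_geodesic_away_from_centre (s₁ S L : ℝ) (hs₁S : s₁ < S)
    (hL : 0 < L) (u v pu pv : ℝ → ℝ)
    (hsys : FLRWGeodesicSystem (Ico s₁ S) L u v pu pv)
    (hms : ∀ s ∈ Ico s₁ S,
      4 * (tOf u v s) ^ 2 * (rOf u v s) ^ 2 * pu s * pv s = L ^ 2) :
    ((pu s₁ ≤ pv s₁ →
      (∀ s ∈ Ico s₁ S, pu s ≤ pv s) ∧ MonotoneOn (rOf u v) (Ico s₁ S))) ∧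
    ((∀ s ∈ Ico s₁ S, pv s < pu s) →
      (∀ s ∈ Ico s₁ S,
        (1 / (rOf u v s₁) ^ 2
            + 2 * (tOf u v s₁ * (pu s₁ - pv s₁)) ^ 2 / L ^ 2) ^ (-(1 : ℝ) / 2)
          ≤ rOf u v s) ∧
      0 < tOf u v s₁ * (pu s₁ - pv s₁) ∧
      ∃ c > (0 : ℝ), ∀ s ∈ Ico s₁ S, c ≤ rOf u v s) := by
  obtain ⟨hvu, hr, hpu0, hpv0, hu', hv', hpu', hpv'⟩ := hsys
  have hs₁ : s₁ ∈ Ico s₁ S := ⟨le_refl _, hs₁S⟩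
  have ht : ∀ s ∈ Ico s₁ S, 0 < tOf u v s := by
    intro s hs
    have := hvu s hs
    unfold tOf
    positivity
  -- derivative of `D := t (pu − pv)` is `−L²/(t r³)`
  have hD' : ∀ s ∈ Ico s₁ S, HasDerivAt (fun s => tOf u v s * (pu s - pv s))
      (-L ^ 2 / (tOf u v s * rOf u v s ^ 3)) s := by
    intro s hs
    have hts : 0 < tOf u v s := ht s hs
    have hst : Real.sqrt (tOf u v s) = (v s + u s) / 2 := by
      unfold tOf
      rw [show (v s + u s) ^ 2 / 4 = ((v s + u s) / 2) ^ 2 by ring,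
        Real.sqrt_sq (by linarith [hvu s hs])]
    have hT : HasDerivAt (tOf u v) (Real.sqrt (tOf u v s) * (pu s + pv s)) s := by
      have h := (((hv' s hs).add (hu' s hs)).pow 2).div_const 4
      refine h.congr_deriv ?_
      symm
      simp only [Pi.add_apply]
      rw [hst]; push_cast; ring
    have h := hT.mul ((hpu' s hs).sub (hpv' s hs))
    refine h.congr_deriv ?_
    symm
    simp only [Pi.sub_apply]
    have hsq : Real.sqrt (tOf u v s) ^ 2 = tOf u v s := Real.sq_sqrt hts.le
    have hs0 : Real.sqrt (tOf u v s) ≠ 0 := by positivity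
    have hr0 : rOf u v s ≠ 0 := (hr s hs).ne'
    rw [show tOf u v s = Real.sqrt (tOf u v s) ^ 2 from hsq.symm]
    field_simp
    rw [Real.sqrt_sq (Real.sqrt_nonneg _)]
    linear_combination
  have hDanti : AntitoneOn (fun s => tOf u v s * (pu s - pv s)) (Ico s₁ S) := by
    apply flrw_aux_antitoneOn hD'
    intro s hs
    have h1 := ht s hs
    have h2 := hr s hs
    have : 0 < tOf u v s * rOf u v s ^ 3 := by positivity
    have : 0 ≤ L ^ 2 := sq_nonneg L
    rw [div_nonpos_iff]
    right
    constructor <;> nlinarith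
  constructor
  · -- part (i)
    intro h₁
    have hpupv : ∀ s ∈ Ico s₁ S, pu s ≤ pv s := by
      intro s hs
      have hle : tOf u v s * (pu s - pv s) ≤ tOf u v s₁ * (pu s₁ - pv s₁) :=
        hDanti hs₁ hs hs.1
      have h0 : tOf u v s₁ * (pu s₁ - pv s₁) ≤ 0 :=
        mul_nonpos_of_nonneg_of_nonpos (ht s₁ hs₁).le (by linarith)
      nlinarith [ht s hs]
    refine ⟨hpupv, ?_⟩
    apply flrw_aux_monotoneOn (f' := fun s => pv s - pu s)
    · intro s hs
      exact (hv' s hs).sub (hu' s hs)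
    · intro s hs
      linarith [hpupv s hs]
  · -- part (ii)
    intro h₂
    have hA : 0 < tOf u v s₁ * (pu s₁ - pv s₁) :=
      mul_pos (ht s₁ hs₁) (sub_pos.2 (h₂ s₁ hs₁))
    -- the conserved quantity H = 1/r² + (t(pu−pv))²/L²
    have hH' : ∀ s ∈ Ico s₁ S, HasDerivAt
        (fun s => (rOf u v s ^ 2)⁻¹ + (tOf u v s * (pu s - pv s)) ^ 2 / L ^ 2)
        (0 : ℝ) s := by
      intro s hs
      have hr0 : rOf u v s ≠ 0 := (hr s hs).ne'
      have ht0 : tOf u v s ≠ 0 := (ht s hs).ne'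
      have hR : HasDerivAt (fun s => rOf u v s) (pv s - pu s) s := (hv' s hs).sub (hu' s hs)
      have h1 : HasDerivAt (fun s => (rOf u v s ^ 2)⁻¹)
          (-(2 * rOf u v s ^ 1 * (pv s - pu s)) / (rOf u v s ^ 2) ^ 2) s :=
        (hR.pow 2).inv (pow_ne_zero 2 hr0)
      have h2 : HasDerivAt (fun s => (tOf u v s * (pu s - pv s)) ^ 2 / L ^ 2)
          ((2 * (tOf u v s * (pu s - pv s)) ^ 1 * (-L ^ 2 / (tOf u v s * rOf u v s ^ 3)))
            / L ^ 2) s :=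
        ((hD' s hs).pow 2).div_const (L ^ 2)
      have h := h1.add h2
      refine h.congr_deriv ?_
      symm
      field_simp
      ring
    have hHanti : AntitoneOn
        (fun s => (rOf u v s ^ 2)⁻¹ + (tOf u v s * (pu s - pv s)) ^ 2 / L ^ 2)
        (Ico s₁ S) := flrw_aux_antitoneOn hH' (fun s _ => le_refl 0)
    have hrs₁ : 0 < rOf u v s₁ := hr s₁ hs₁
    have hBpos : 0 < 1 / (rOf u v s₁) ^ 2
        + 2 * (tOf u v s₁ * (pu s₁ - pv s₁)) ^ 2 / L ^ 2 := by positivity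
    have main : ∀ s ∈ Ico s₁ S,
        (1 / (rOf u v s₁) ^ 2
            + 2 * (tOf u v s₁ * (pu s₁ - pv s₁)) ^ 2 / L ^ 2) ^ (-(1 : ℝ) / 2)
          ≤ rOf u v s := by
      intro s hs
      set B : ℝ := 1 / (rOf u v s₁) ^ 2
          + 2 * (tOf u v s₁ * (pu s₁ - pv s₁)) ^ 2 / L ^ 2 with hBdef
      have hRs : 0 < rOf u v s := hr s hs
      have hHle := hHanti hs₁ hs hs.1
      have hDsq : 0 ≤ (tOf u v s * (pu s - pv s)) ^ 2 / L ^ 2 := by positivity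
      have hDsq₁ : 0 ≤ (tOf u v s₁ * (pu s₁ - pv s₁)) ^ 2 / L ^ 2 := by positivity
      have hkey : (rOf u v s ^ 2)⁻¹ ≤ B := by
        rw [hBdef, one_div]
        simp only at hHle
        have h2 : 2 * (tOf u v s₁ * (pu s₁ - pv s₁)) ^ 2 / L ^ 2
            = 2 * ((tOf u v s₁ * (pu s₁ - pv s₁)) ^ 2 / L ^ 2) := by ring
        linarith
      have hrpow : B ^ (-(1 : ℝ) / 2) = (Real.sqrt B)⁻¹ := by
        rw [show (-(1 : ℝ) / 2) = -(1 / 2 : ℝ) by ring, Real.rpow_neg hBpos.le,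
          ← Real.sqrt_eq_rpow]
      rw [hrpow]
      have hsqrtle : (rOf u v s)⁻¹ ≤ Real.sqrt B := by
        have := Real.sqrt_le_sqrt hkey
        rwa [Real.sqrt_inv, Real.sqrt_sq hRs.le] at this
      have := inv_anti₀ (inv_pos.2 hRs) hsqrtle
      rwa [inv_inv] at this
    refine ⟨main, hA, ⟨(1 / (rOf u v s₁) ^ 2
        + 2 * (tOf u v s₁ * (pu s₁ - pv s₁)) ^ 2 / L ^ 2) ^ (-(1 : ℝ) / 2),
      Real.rpow_pos_of_pos hBpos _, main⟩⟩
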